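/- For all integers n, N ≥ 1, the deterministic safety automaton over W = (−N,N) with state set {q ∈ ℤ : −nN < q < nN} ∪ {⊥}, initial state nN − 1, and transition function δ(q,w) = min(nN − 1, q + w) if q + w > −nN and δ(q,w) = ⊥ otherwise (and δ(⊥,w) = ⊥), is an (n,(−N,N))-separating automaton. -/

import Mathlib

open Filter


/-- A finite path: a list of consecutive edges, all belonging to `E`,
starting at `u` (when nonempty). -/
def FinPath {V : Type} (E : Set (V × ℤ × V)) (u : V) (p : List (V × ℤ × V)) : Prop :=
  (∀ e ∈ p, e ∈ E) ∧ List.Chain' (fun e e' => e.2.2 = e'.1) p ∧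
    ∀ h : p ≠ [], (p.head h).1 = u

/-- The last vertex of a finite path starting at `u` (which is `u` itself for the empty path). -/
def lastV {V : Type} (u : V) (p : List (V × ℤ × V)) : V :=
  (p.getLastD (u, 0, u)).2.2

/-- An infinite path: a sequence of consecutive edges, all belonging to `E`. -/
def InfPath {V : Type} (E : Set (V × ℤ × V)) (π : ℕ → V × ℤ × V) : Prop :=
  (∀ i, π i ∈ E) ∧ ∀ i, (π i).2.2 = (π (i + 1)).1

/-- The total weight of a finite path. -/
def pathWeight {V : Type} (p : List (V × ℤ × V)) : ℤ :=
  (p.map fun e => e.2.1).sum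

/-- A sequence of integer weights satisfies mean payoff if the liminf of the
averages of its prefixes is nonnegative. -/
def MeanPayoffSeq (w : ℕ → ℤ) : Prop :=
  0 ≤ Filter.atTop.liminf (fun ℓ : ℕ => (∑ i ∈ Finset.range ℓ, (w i : ℝ)) / (ℓ : ℝ))

/-- A graph (given by its edge set) satisfies mean payoff if all its infinite paths do. -/
def SatMP {V : Type} (E : Set (V × ℤ × V)) : Prop :=
  ∀ π : ℕ → V × ℤ × V, InfPath E π → MeanPayoffSeq (fun i => (π i).2.1)

/-- A cycle: a nonempty finite path whose first and last vertices coincide. -/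
def IsCycle {V : Type} (E : Set (V × ℤ × V)) (p : List (V × ℤ × V)) : Prop :=
  p ≠ [] ∧ ∃ v, FinPath E v p ∧ lastV v p = v

/-- A `W`-graph: a finite set of vertices, edges labelled by weights in `W`,
and an initial vertex from which every vertex is reachable. -/
structure WGraph (W : Finset ℤ) where
  V : Type
  fin : Fintype V
  E : Set (V × ℤ × V)
  init : V
  wt : ∀ e ∈ E, e.2.1 ∈ W
  reach : ∀ v : V, ∃ p, FinPath E init p ∧ lastV init p = v

attribute [instance] WGraph.fin

/-- A deterministic safety automaton over the alphabet `W`. -/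
structure SafetyAut (W : Finset ℤ) where
  Q : Type
  fin : Fintype Q
  bot : Q
  qinit : Q
  δ : Q → ℤ → Q
  bot_absorbing : ∀ w ∈ W, δ bot w = bot

attribute [instance] SafetyAut.fin

/-- The run of the automaton over an infinite word. -/
def SafetyAut.run {W : Finset ℤ} (A : SafetyAut W) (w : ℕ → ℤ) : ℕ → A.Q
  | 0 => A.qinit
  | i + 1 => A.δ (A.run w i) (w i)

/-- The language of the automaton: words over `W` whose run never visits `⊥`. -/
def SafetyAut.Lang {W : Finset ℤ} (A : SafetyAut W) : Set (ℕ → ℤ) :=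
  {w | (∀ i, w i ∈ W) ∧ ∀ i, A.run w i ≠ A.bot}

/-- `MP(W)`: the set of infinite words over `W` satisfying mean payoff. -/
def MPlang (W : Finset ℤ) : Set (ℕ → ℤ) :=
  {w | (∀ i, w i ∈ W) ∧ MeanPayoffSeq w}

/-- `MP_n(W)`: the set of weight sequences of infinite paths of `(n,W)`-graphs
satisfying mean payoff. -/
def MPn (n : ℕ) (W : Finset ℤ) : Set (ℕ → ℤ) :=
  {w | ∃ G : WGraph W, Fintype.card G.V ≤ n ∧ SatMP G.E ∧
    ∃ π, InfPath G.E π ∧ ∀ i, (π i).2.1 = w i}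

/-- An `(n,W)`-separating automaton: its language `L` satisfies `MP_n(W) ⊆ L ⊆ MP(W)`. -/
def Separating {W : Finset ℤ} (n : ℕ) (A : SafetyAut W) : Prop :=
  MPn n W ⊆ A.Lang ∧ A.Lang ⊆ MPlang W

/-- The `W`-linear graph on a set `A ⊆ ℤ`: vertices are the elements of `A`, and
for `v, v' ∈ A` and `w ∈ W` there is an edge `(v, w, v')` whenever `v' - v ≤ w`. -/
def LinE (W : Finset ℤ) (A : Set ℤ) : Set (ℤ × ℤ × ℤ) :=
  {e | e.1 ∈ A ∧ e.2.2 ∈ A ∧ e.2.1 ∈ W ∧ e.2.2 - e.1 ≤ e.2.1}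

/-- A homomorphism of labelled graphs (no requirement on initial vertices). -/
def IsHom {V U : Type} (E : Set (V × ℤ × V)) (E' : Set (U × ℤ × U)) (φ : V → U) : Prop :=
  ∀ e ∈ E, (φ e.1, e.2.1, φ e.2.2) ∈ E'

/-- A graph (given by its edge set) is `(n,W)`-universal if it satisfies mean payoff and
every `(n,W)`-graph satisfying mean payoff admits a homomorphism into it. -/
def Universal (n : ℕ) (W : Finset ℤ) {U : Type} (EU : Set (U × ℤ × U)) : Prop :=
  SatMP EU ∧
    ∀ G : WGraph W, Fintype.card G.V ≤ n → SatMP G.E → ∃ φ : G.V → U, IsHom G.E EU φ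

/-- The set of weights `(-N, N)`: integers `w` with `-N < w < N`. -/
noncomputable def Wball (N : ℕ) : Finset ℤ := Finset.Ioo (-(N : ℤ)) (N : ℤ)

/-- `φ` is the distance function from the initial vertex: `φ v` is the minimum total
weight of a finite path from the initial vertex to `v`. -/
def IsDistFrom {W : Finset ℤ} (G : WGraph W) (φ : G.V → ℤ) : Prop :=
  ∀ v : G.V,
    (∃ p, FinPath G.E G.init p ∧ lastV G.init p = v ∧ pathWeight p = φ v) ∧
    ∀ p, FinPath G.E G.init p → lastV G.init p = v → φ v ≤ pathWeight p

/-- The deterministic safety automaton over `(-N, N)` with states the integers of the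
interval `(-nN, nN)` (plus `⊥`), initial state `nN - 1`, and transition function
`δ(q, w) = min (nN - 1) (q + w)` when `q + w > -nN`, and `δ(q, w) = ⊥` otherwise. -/
noncomputable def clampAut (n N : ℕ) (hn : 1 ≤ n) (hN : 1 ≤ N) : SafetyAut (Wball N) where
  Q := Option ↥(Set.Ioo (-(n * N : ℤ)) (n * N : ℤ))
  fin := inferInstance
  bot := none
  qinit := some ⟨(n * N : ℤ) - 1, by
    have h1 : (1 : ℤ) ≤ (n : ℤ) * (N : ℤ) := by
      exact_mod_cast Nat.mul_pos hn hN
    constructor <;> linarith⟩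
  δ := fun q w =>
    match q with
    | none => none
    | some q =>
      if h : -(n * N : ℤ) < q.1 + w then
        some ⟨min ((n * N : ℤ) - 1) (q.1 + w), by
          have h1 : (1 : ℤ) ≤ (n : ℤ) * (N : ℤ) := by
            exact_mod_cast Nat.mul_pos hn hN
          have h2 := q.2
          simp only [Set.mem_Ioo] at h2
          constructor
          · exact lt_min_iff.mpr ⟨by linarith, h⟩
          · exact lt_of_le_of_lt (min_le_left _ _) (by linarith)⟩
      else none
  bot_absorbing := fun w _ => rfl


/-- A function-based path. -/
def FPath {V : Type} (E : Set (V × ℤ × V)) (f : ℕ → V) (w : ℕ → ℤ) (L : ℕ) : Prop :=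
  ∀ k < L, (f k, w k, f (k + 1)) ∈ E

lemma cycle_nonneg {V : Type} {E : Set (V × ℤ × V)} (hMP : SatMP E)
    {f : ℕ → V} {w : ℕ → ℤ} {L : ℕ} (hp : FPath E f w L) (hL : 0 < L)
    (hc : f L = f 0) : 0 ≤ ∑ k ∈ Finset.range L, w k := by
  set C : ℤ := ∑ k ∈ Finset.range L, w k with hC
  by_contra hneg
  push_neg at hneg
  -- the periodic infinite path
  set π : ℕ → V × ℤ × V := fun i => (f (i % L), w (i % L), f (i % L + 1)) with hπ
  have hinf : InfPath E π := by
    constructor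
    · intro i; exact hp _ (Nat.mod_lt _ hL)
    · intro i
      show f (i % L + 1) = f ((i + 1) % L)
      have h1 : (i % L + 1) % L = (i + 1) % L := Nat.mod_add_mod i L 1
      rcases Nat.lt_or_ge (i % L + 1) L with h | h
      · rw [← h1, Nat.mod_eq_of_lt h]
      · have h' : i % L + 1 = L := le_antisymm (Nat.succ_le_of_lt (Nat.mod_lt i hL)) h
        rw [h', hc, ← h1, h', Nat.mod_self]
  have hmps : MeanPayoffSeq (fun i => (π i).2.1) := hMP π hinf
  have hw : (fun i => (π i).2.1) = fun i => w (i % L) := rfl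
  rw [hw] at hmps
  unfold MeanPayoffSeq at hmps
  -- partial sums at multiples of L
  have hsum : ∀ q : ℕ, ∑ i ∈ Finset.range (q * L), w (i % L) = q * C := by
    intro q
    induction q with
    | zero => simp
    | succ q ih =>
      have : (q + 1) * L = q * L + L := by ring
      rw [this, Finset.sum_range_add, ih]
      have : ∑ i ∈ Finset.range L, w ((q * L + i) % L) = C := by
        apply Finset.sum_congr rfl
        intro k hk
        rw [Nat.mul_comm q L, Nat.add_comm, Nat.add_mul_mod_self_left,
          Nat.mod_eq_of_lt (Finset.mem_range.mp hk)]
      rw [this]; push_cast; ring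
  -- boundedness of averages
  set u : ℕ → ℝ := fun ℓ => (∑ i ∈ Finset.range ℓ, ((w (i % L) : ℝ))) / (ℓ : ℝ) with hu
  have hM : ∃ M : ℝ, ∀ ℓ, |u ℓ| ≤ M := by
    refine ⟨∑ k ∈ Finset.range L, |(w k : ℝ)|, fun ℓ => ?_⟩
    set M : ℝ := ∑ k ∈ Finset.range L, |(w k : ℝ)| with hMdef
    have hM0 : 0 ≤ M := Finset.sum_nonneg fun _ _ => abs_nonneg _
    rcases Nat.eq_zero_or_pos ℓ with h0 | h0
    · simp [hu, h0, hM0]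
    · have hterm : ∀ i ∈ Finset.range ℓ, |(w (i % L) : ℝ)| ≤ M := by
        intro i _
        exact Finset.single_le_sum (f := fun k => |(w k : ℝ)|)
              (fun _ _ => abs_nonneg _) (Finset.mem_range.mpr (Nat.mod_lt _ hL))
      have h1 : |∑ i ∈ Finset.range ℓ, ((w (i % L) : ℝ))| ≤ ℓ * M := by
        calc |∑ i ∈ Finset.range ℓ, ((w (i % L) : ℝ))|
            ≤ ∑ i ∈ Finset.range ℓ, |(w (i % L) : ℝ)| := Finset.abs_sum_le_sum_abs _ _
          _ ≤ ∑ _i ∈ Finset.range ℓ, M := Finset.sum_le_sum hterm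
          _ = ℓ * M := by rw [Finset.sum_const, Finset.card_range]; ring
      rw [hu]
      rw [abs_div, abs_of_nonneg (by positivity : (0:ℝ) ≤ (ℓ:ℝ)),
        div_le_iff₀ (by positivity)]
      calc |∑ i ∈ Finset.range ℓ, ((w (i % L) : ℝ))| ≤ ℓ * M := h1
        _ = M * ℓ := by ring
  obtain ⟨M, hMle⟩ := hM
  have hbdd : Filter.IsBoundedUnder (· ≥ ·) Filter.atTop u :=
    Filter.isBoundedUnder_of ⟨-M, fun ℓ => neg_le_of_abs_le (hMle ℓ)⟩
  have hb : (C : ℝ) / (2 * L) < Filter.atTop.liminf u := by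
    apply lt_of_lt_of_le _ hmps
    apply div_neg_of_neg_of_pos
    · exact_mod_cast hneg
    · positivity
  have hev := Filter.eventually_lt_of_lt_liminf hb hbdd
  rw [Filter.eventually_atTop] at hev
  obtain ⟨m, hm⟩ := hev
  -- evaluate at ℓ = (m+1) * L
  have hℓ : m ≤ (m + 1) * L := by nlinarith [hL]
  have h2 := hm ((m + 1) * L) hℓ
  have hnum : (∑ i ∈ Finset.range ((m+1) * L), ((w (i % L) : ℝ))) = ((m+1 : ℕ) : ℝ) * C := by
    rw [← Int.cast_sum]
    rw_mod_cast [hsum (m+1)]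
  have h3 : u ((m + 1) * L) = (C : ℝ) / L := by
    show (∑ i ∈ Finset.range ((m+1) * L), ((w (i % L) : ℝ))) / (((m+1) * L : ℕ) : ℝ) = _
    rw [hnum]
    have hm1 : (0:ℝ) < ((m : ℝ) + 1) := by positivity
    have hL' : (0:ℝ) < (L : ℝ) := by exact_mod_cast hL
    push_cast
    rw [div_eq_div_iff (by positivity) (by positivity)]
    ring
  rw [h3] at h2
  have hC0 : (C : ℝ) < 0 := by exact_mod_cast hneg
  have hL0 : (0 : ℝ) < L := by exact_mod_cast hL
  have : (C : ℝ) / L < (C : ℝ) / (2 * L) := by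
    rw [div_lt_div_iff₀ hL0 (by positivity)]
    nlinarith
  linarith

lemma segRemove {V : Type} {E : Set (V × ℤ × V)} {f : ℕ → V} {w : ℕ → ℤ} {L i j : ℕ}
    (hp : FPath E f w L) (hij : i < j) (hjL : j ≤ L) (hf : f i = f j) :
    ∃ f' w', FPath E f' w' (L - (j - i)) ∧ f' 0 = f 0 ∧ f' (L - (j - i)) = f L ∧
      ∑ k ∈ Finset.range (L - (j - i)), w' k =
        ∑ k ∈ Finset.range L, w k - ∑ k ∈ Finset.range (j - i), w (i + k) := by
  set d := j - i with hd
  have hid : i + d = j := by omega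
  refine ⟨fun k => if k < i then f k else f (k + d),
          fun k => if k < i then w k else w (k + d), ?_, ?_, ?_, ?_⟩
  · intro k hk
    have hkL : k < L - d := hk
    by_cases h1 : k < i
    · by_cases h2 : k + 1 < i
      · simpa [h1, h2] using hp k (by omega)
      · have hk1 : k + 1 = i := by omega
        have : f (k + 1 + d) = f (k + 1) := by rw [hk1, hid, ← hf]
        simp only [h1, if_pos, if_neg (by omega : ¬ k + 1 < i), this]
        exact hp k (by omega)
    · have h2 : ¬ (k + 1 < i) := by omega
      simp only [if_neg h1, if_neg h2]
      have : k + 1 + d = k + d + 1 := by omega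
      rw [this]
      exact hp (k + d) (by omega)
  · by_cases h1 : 0 < i
    · simp [h1]
    · have hi0 : i = 0 := by omega
      simp only [if_neg (by omega : ¬ (0:ℕ) < i)]
      rw [show 0 + d = j by omega, ← hf, hi0]
  · have h1 : ¬ (L - d < i) := by omega
    simp only [if_neg h1]
    congr 1
    omega
  · have hsplit : L - d = i + (L - j) := by omega
    rw [hsplit, Finset.sum_range_add]
    have e1 : ∑ k ∈ Finset.range i, (if k < i then w k else w (k + d)) =
        ∑ k ∈ Finset.range i, w k := by
      apply Finset.sum_congr rfl; intro k hk
      rw [if_pos (Finset.mem_range.mp hk)]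
    have e2 : ∑ k ∈ Finset.range (L - j), (if i + k < i then w (i + k) else w (i + k + d)) =
        ∑ k ∈ Finset.range (L - j), w (j + k) := by
      apply Finset.sum_congr rfl; intro k hk
      rw [if_neg (by omega)]
      congr 1
      omega
    rw [e1, e2]
    have hsplit2 : L = i + ((j - i) + (L - j)) := by omega
    rw [show (Finset.range L) = Finset.range (i + ((j - i) + (L - j))) by rw [← hsplit2]]
    rw [Finset.sum_range_add, Finset.sum_range_add]
    have e3 : ∑ k ∈ Finset.range (L - j), w (i + (j - i + k)) =
        ∑ k ∈ Finset.range (L - j), w (j + k) := by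
      apply Finset.sum_congr rfl; intro k hk
      congr 1; omega
    rw [e3]
    ring

lemma shorten {V : Type} [Fintype V] {E : Set (V × ℤ × V)}
    (hE : ∀ (f : ℕ → V) (w : ℕ → ℤ) (L : ℕ), FPath E f w L → 0 < L → f L = f 0 →
      0 ≤ ∑ k ∈ Finset.range L, w k) :
    ∀ (L : ℕ) (f : ℕ → V) (w : ℕ → ℤ), FPath E f w L →
      ∃ (L' : ℕ) (f' : ℕ → V) (w' : ℕ → ℤ), FPath E f' w' L' ∧ L' < Fintype.card V ∧
        f' 0 = f 0 ∧ f' L' = f L ∧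
        ∑ k ∈ Finset.range L', w' k ≤ ∑ k ∈ Finset.range L, w k := by
  intro L
  induction L using Nat.strong_induction_on with
  | _ L ih =>
    intro f w hp
    by_cases hlt : L < Fintype.card V
    · exact ⟨L, f, w, hp, hlt, rfl, rfl, le_refl _⟩
    · push_neg at hlt
      have hL0 : 0 < L := by
        have : 0 < Fintype.card V := Fintype.card_pos_iff.mpr ⟨f 0⟩
        omega
      obtain ⟨x, y, hxy, hfxy⟩ := Fintype.exists_ne_map_eq_of_card_lt
        (fun k : Fin (L + 1) => f k) (by rw [Fintype.card_fin]; omega)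
      rcases lt_or_gt_of_ne hxy with hlt2 | hlt2
      · have := segRemove hp (show (x:ℕ) < (y:ℕ) from hlt2) (by omega) hfxy
        obtain ⟨f', w', hp', h0, hlast, hsum⟩ := this
        have hcyc : 0 ≤ ∑ k ∈ Finset.range ((y:ℕ) - (x:ℕ)), w ((x:ℕ) + k) := by
          refine hE (fun k => f ((x:ℕ) + k)) (fun k => w ((x:ℕ) + k)) ((y:ℕ) - (x:ℕ))
            (fun k hk => hp _ (by omega)) (by omega) ?_
          show f ((x:ℕ) + ((y:ℕ) - (x:ℕ))) = f ((x:ℕ) + 0)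
          rw [show (x:ℕ) + ((y:ℕ) - (x:ℕ)) = (y:ℕ) by omega,
            show (x:ℕ) + 0 = (x:ℕ) by omega]
          exact hfxy.symm
        obtain ⟨L'', f'', w'', hp'', hcard'', h0'', hlast'', hsum''⟩ :=
          ih (L - ((y:ℕ) - (x:ℕ))) (by omega) f' w' hp'
        exact ⟨L'', f'', w'', hp'', hcard'', by rw [h0'', h0], by rw [hlast'', hlast],
          by rw [hsum] at hsum''; omega⟩
      · have hfyx : f (y:ℕ) = f (x:ℕ) := hfxy.symm
        have := segRemove hp (show (y:ℕ) < (x:ℕ) from hlt2) (by omega) hfyx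
        obtain ⟨f', w', hp', h0, hlast, hsum⟩ := this
        have hcyc : 0 ≤ ∑ k ∈ Finset.range ((x:ℕ) - (y:ℕ)), w ((y:ℕ) + k) := by
          refine hE (fun k => f ((y:ℕ) + k)) (fun k => w ((y:ℕ) + k)) ((x:ℕ) - (y:ℕ))
            (fun k hk => hp _ (by omega)) (by omega) ?_
          show f ((y:ℕ) + ((x:ℕ) - (y:ℕ))) = f ((y:ℕ) + 0)
          rw [show (y:ℕ) + ((x:ℕ) - (y:ℕ)) = (x:ℕ) by omega,
            show (y:ℕ) + 0 = (y:ℕ) by omega]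
          exact hfxy
        obtain ⟨L'', f'', w'', hp'', hcard'', h0'', hlast'', hsum''⟩ :=
          ih (L - ((x:ℕ) - (y:ℕ))) (by omega) f' w' hp'
        exact ⟨L'', f'', w'', hp'', hcard'', by rw [h0'', h0], by rw [hlast'', hlast],
          by rw [hsum] at hsum''; omega⟩

lemma list_to_fun {V : Type} {E : Set (V × ℤ × V)} {u : V} {p : List (V × ℤ × V)}
    (hp : FinPath E u p) :
    ∃ f w, FPath E f w p.length ∧ f 0 = u ∧ f p.length = lastV u p := by
  obtain ⟨hmem, hchain, hhead⟩ := hp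
  set f : ℕ → V := fun k => lastV u (p.take k) with hf
  set w : ℕ → ℤ := fun k => (p.getD k (u, 0, u)).2.1 with hw
  have hA : ∀ k, (hk : k < p.length) → f (k + 1) = p[k].2.2 := by
    intro k hk
    show lastV u (p.take (k + 1)) = _
    rw [List.take_succ, List.getElem?_eq_getElem hk]
    unfold lastV
    rw [Option.toList_some, List.getLastD_concat]
  have hB : ∀ k, (hk : k < p.length) → f k = p[k].1 := by
    intro k
    induction k with
    | zero =>
      intro hk
      have hne : p ≠ [] := by intro h; rw [h] at hk; simp at hk
      show lastV u (p.take 0) = p[0].1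
      rw [List.take_zero]
      show u = p[0].1
      rw [← hhead hne]
      congr 1
      exact List.head_eq_getElem hne
    | succ k ihk =>
      intro hk
      rw [hA k (by omega)]
      have := List.isChain_iff_getElem.mp hchain k (by omega)
      simpa using this
  refine ⟨f, w, ?_, ?_, ?_⟩
  · intro k hk
    have h1 := hB k hk
    have h2 : w k = p[k].2.1 := by
      show (p.getD k (u,0,u)).2.1 = _
      rw [List.getD_eq_getElem _ _ hk]
    have h3 := hA k hk
    rw [h1, h2, h3]
    simpa using hmem p[k] (List.getElem_mem hk)
  · show lastV u (p.take 0) = u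
    rw [List.take_zero]; rfl
  · show lastV u (p.take p.length) = lastV u p
    rw [List.take_length]

lemma wball_bounds {N : ℕ} {z : ℤ} (hz : z ∈ Wball N) : -((N:ℤ) - 1) ≤ z ∧ z ≤ (N:ℤ) - 1 := by
  simp only [Wball, Finset.mem_Ioo] at hz
  omega

/-- The predicate: `c` is the weight of some path of length `< n` from `init` to `v`. -/
def PathVal {W : Finset ℤ} (G : WGraph W) (n : ℕ) (v : G.V) (c : ℤ) : Prop :=
  ∃ (L : ℕ) (f : ℕ → G.V) (w : ℕ → ℤ), L < n ∧ FPath G.E f w L ∧ f 0 = G.init ∧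
    f L = v ∧ ∑ k ∈ Finset.range L, w k = c

lemma exists_potential {n N : ℕ} (hn : 1 ≤ n) (hN : 1 ≤ N) (G : WGraph (Wball N))
    (hcard : Fintype.card G.V ≤ n) (hMP : SatMP G.E) :
    ∃ φ : G.V → ℤ, (∀ e ∈ G.E, φ e.2.2 ≤ φ e.1 + e.2.1) ∧
      ∀ v, |φ v| ≤ ((n:ℤ) - 1) * ((N:ℤ) - 1) := by
  classical
  have hn' : (1:ℤ) ≤ (n:ℤ) := by exact_mod_cast hn
  have hN' : (1:ℤ) ≤ (N:ℤ) := by exact_mod_cast hN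
  set B : ℤ := ((n:ℤ) - 1) * ((N:ℤ) - 1) with hB
  have hE : ∀ (f : ℕ → G.V) (w : ℕ → ℤ) (L : ℕ), FPath G.E f w L → 0 < L → f L = f 0 →
      0 ≤ ∑ k ∈ Finset.range L, w k :=
    fun f w L hp hL hc => cycle_nonneg hMP hp hL hc
  have hbound : ∀ (v : G.V) (c : ℤ), PathVal G n v c → -B ≤ c ∧ c ≤ B := by
    rintro v c ⟨L, f, w, hLn, hp, h0, hlast, hsum⟩
    have hterm : ∀ k ∈ Finset.range L, -((N:ℤ)-1) ≤ w k ∧ w k ≤ (N:ℤ)-1 := by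
      intro k hk
      exact wball_bounds (G.wt _ (hp k (Finset.mem_range.mp hk)))
    have h1 : -((L:ℤ) * ((N:ℤ)-1)) ≤ c := by
      rw [← hsum]
      calc -((L:ℤ) * ((N:ℤ)-1)) = ∑ _k ∈ Finset.range L, (-((N:ℤ)-1)) := by
            rw [Finset.sum_const, Finset.card_range]; push_cast; ring
        _ ≤ _ := Finset.sum_le_sum fun k hk => (hterm k hk).1
    have h2 : c ≤ (L:ℤ) * ((N:ℤ)-1) := by
      rw [← hsum]
      calc (∑ k ∈ Finset.range L, w k) ≤ ∑ _k ∈ Finset.range L, ((N:ℤ)-1) :=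
            Finset.sum_le_sum fun k hk => (hterm k hk).2
        _ = (L:ℤ) * ((N:ℤ)-1) := by rw [Finset.sum_const, Finset.card_range]; push_cast; ring
    have hL' : (L:ℤ) ≤ (n:ℤ) - 1 := by
      have : (L:ℤ) + 1 ≤ (n:ℤ) := by exact_mod_cast hLn
      linarith
    have hLB : (L:ℤ) * ((N:ℤ)-1) ≤ B :=
      mul_le_mul_of_nonneg_right hL' (by linarith)
    exact ⟨by linarith, by linarith⟩
  have hinh : ∀ v : G.V, ∃ c, PathVal G n v c := by
    intro v
    obtain ⟨p, hp, hlast⟩ := G.reach v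
    obtain ⟨f, w, hfp, h0, hL⟩ := list_to_fun hp
    obtain ⟨L', f', w', hp', hcard', h0', hlast', _⟩ := shorten hE p.length f w hfp
    exact ⟨_, L', f', w', by omega, hp', by rw [h0', h0], by rw [hlast', hL, hlast], rfl⟩
  have hleast : ∀ v : G.V, ∃ lb, PathVal G n v lb ∧ ∀ c, PathVal G n v c → lb ≤ c :=
    fun v => Int.exists_least_of_bdd ⟨-B, fun c hc => (hbound v c hc).1⟩ (hinh v)
  choose φ hφP hφle using hleast
  refine ⟨φ, ?_, ?_⟩
  · intro e he
    obtain ⟨L, f, w, hLn, hp, h0, hlast, hsum⟩ := hφP e.1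
    have hp' : FPath G.E (fun k => if k = L + 1 then e.2.2 else f k)
        (fun k => if k = L then e.2.1 else w k) (L + 1) := by
      intro k hk
      rcases Nat.lt_or_ge k L with h | h
      · simp only [if_neg (by omega : ¬ k = L + 1), if_neg (by omega : ¬ k + 1 = L + 1),
          if_neg (by omega : ¬ k = L)]
        exact hp k h
      · have hkL : k = L := by omega
        subst hkL
        simp only [if_neg (by omega : ¬ k = k + 1), if_pos rfl, hlast]
        simpa using he
    obtain ⟨L'', f'', w'', hp'', hcard'', h0'', hlast'', hsum''⟩ := shorten hE (L+1) _ _ hp'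
    have hP'' : PathVal G n e.2.2 (∑ k ∈ Finset.range L'', w'' k) := by
      refine ⟨L'', f'', w'', by omega, hp'', ?_, ?_, rfl⟩
      · rw [h0'']
        simp only [if_neg (by omega : ¬ 0 = L + 1)]
        exact h0
      · rw [hlast'']
        exact if_pos rfl
    have hle := hφle _ _ hP''
    have hsum' : (∑ k ∈ Finset.range (L+1), (if k = L then e.2.1 else w k)) =
        φ e.1 + e.2.1 := by
      rw [Finset.sum_range_succ, if_pos rfl]
      have : (∑ k ∈ Finset.range L, (if k = L then e.2.1 else w k)) =
          ∑ k ∈ Finset.range L, w k :=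
        Finset.sum_congr rfl fun k hk => if_neg (by
          have := Finset.mem_range.mp hk; omega)
      rw [this, hsum]
    rw [hsum'] at hsum''
    exact le_trans hle hsum''
  · intro v
    rw [abs_le]
    exact hbound v (φ v) (hφP v)

lemma clamp_mem {n N : ℕ} (hn : 1 ≤ n) (hN : 1 ≤ N)
    (q : ↥(Set.Ioo (-((n:ℤ) * (N:ℤ))) ((n:ℤ) * (N:ℤ)))) (ω : ℤ)
    (h : -((n:ℤ) * (N:ℤ)) < q.1 + ω) :
    min ((n:ℤ) * (N:ℤ) - 1) (q.1 + ω) ∈ Set.Ioo (-((n:ℤ) * (N:ℤ))) ((n:ℤ) * (N:ℤ)) := by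
  have h1 : (1 : ℤ) ≤ (n : ℤ) * (N : ℤ) := by exact_mod_cast Nat.mul_pos hn hN
  have h2 := q.2
  simp only [Set.mem_Ioo] at h2 ⊢
  constructor
  · exact lt_min_iff.mpr ⟨by linarith, h⟩
  · exact lt_of_le_of_lt (min_le_left _ _) (by linarith)

lemma clampAut_δ_pos {n N : ℕ} (hn : 1 ≤ n) (hN : 1 ≤ N)
    (q : ↥(Set.Ioo (-((n:ℤ) * (N:ℤ))) ((n:ℤ) * (N:ℤ)))) (ω : ℤ)
    (h : -((n:ℤ) * (N:ℤ)) < q.1 + ω) :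
    (clampAut n N hn hN).δ (some q) ω =
      some ⟨min ((n:ℤ) * (N:ℤ) - 1) (q.1 + ω), clamp_mem hn hN q ω h⟩ := by
  simp only [clampAut]
  rw [dif_pos h]

lemma clampAut_δ_neg {n N : ℕ} (hn : 1 ≤ n) (hN : 1 ≤ N)
    (q : ↥(Set.Ioo (-((n:ℤ) * (N:ℤ))) ((n:ℤ) * (N:ℤ)))) (ω : ℤ)
    (h : ¬ (-((n:ℤ) * (N:ℤ)) < q.1 + ω)) :
    (clampAut n N hn hN).δ (some q) ω = none := by
  simp only [clampAut]
  rw [dif_neg h]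

lemma qinit_mem {n N : ℕ} (hn : 1 ≤ n) (hN : 1 ≤ N) :
    (n:ℤ) * (N:ℤ) - 1 ∈ Set.Ioo (-((n:ℤ) * (N:ℤ))) ((n:ℤ) * (N:ℤ)) := by
  have h1 : (1 : ℤ) ≤ (n : ℤ) * (N : ℤ) := by exact_mod_cast Nat.mul_pos hn hN
  constructor <;> simp <;> linarith

lemma lang_sub_mp (n N : ℕ) (hn : 1 ≤ n) (hN : 1 ≤ N) :
    (clampAut n N hn hN).Lang ⊆ MPlang (Wball N) := by
  intro w hw
  obtain ⟨hW, hbot⟩ := hw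
  set A := clampAut n N hn hN with hA
  have key : ∀ i, ∃ q, A.run w i = some q ∧
      (q.1 : ℤ) ≤ (n:ℤ) * (N:ℤ) - 1 + ∑ k ∈ Finset.range i, w k := by
    intro i
    induction i with
    | zero => exact ⟨⟨(n:ℤ) * (N:ℤ) - 1, qinit_mem hn hN⟩, rfl, by simp⟩
    | succ i ih =>
      obtain ⟨q, hq, hle⟩ := ih
      have hrun : A.run w (i+1) = A.δ (some q) (w i) := by rw [← hq]; rfl
      by_cases h : -((n:ℤ) * (N:ℤ)) < q.1 + w i
      · refine ⟨_, by rw [hrun]; exact clampAut_δ_pos hn hN q (w i) h, ?_⟩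
        show min ((n:ℤ) * (N:ℤ) - 1) (q.1 + w i) ≤ _
        rw [Finset.sum_range_succ]
        calc min ((n:ℤ) * (N:ℤ) - 1) (q.1 + w i) ≤ q.1 + w i := min_le_right _ _
          _ ≤ _ := by linarith
      · exfalso
        apply hbot (i+1)
        rw [hrun]
        exact clampAut_δ_neg hn hN q (w i) h
  have hZ : ∀ ℓ, -(2 * (n:ℤ) * (N:ℤ)) ≤ ∑ k ∈ Finset.range ℓ, w k := by
    intro ℓ
    obtain ⟨q, _, hle⟩ := key ℓ
    have := q.2.1
    linarith [q.2.1, q.2.2]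
  refine ⟨hW, ?_⟩
  unfold MeanPayoffSeq
  set C : ℝ := 2 * (n:ℝ) * (N:ℝ) with hC
  have hC0 : 0 ≤ C := by positivity
  set v : ℕ → ℝ := fun ℓ => (∑ i ∈ Finset.range ℓ, ((w i : ℝ))) / (ℓ : ℝ) with hv
  have hav : ∀ ℓ : ℕ, 1 ≤ ℓ → -C / (ℓ:ℝ) ≤ v ℓ := by
    intro ℓ hℓ
    have hℓ' : (0:ℝ) < (ℓ:ℝ) := by exact_mod_cast hℓ
    rw [hv, div_le_div_iff_of_pos_right hℓ']
    have := hZ ℓ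
    calc -C = ((-(2 * (n:ℤ) * (N:ℤ)) : ℤ) : ℝ) := by push_cast; ring
      _ ≤ ((∑ k ∈ Finset.range ℓ, w k : ℤ) : ℝ) := by exact_mod_cast this
      _ = ∑ i ∈ Finset.range ℓ, ((w i : ℝ)) := by push_cast; rfl
  have hbdd_v : Filter.IsBoundedUnder (· ≥ ·) Filter.atTop v := by
    refine ⟨-C, ?_⟩
    rw [Filter.eventually_map, Filter.eventually_atTop]
    refine ⟨1, fun ℓ hℓ => ?_⟩
    have h1 : -C ≤ -C / (ℓ:ℝ) := by
      have hℓ' : (1:ℝ) ≤ (ℓ:ℝ) := by exact_mod_cast hℓ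
      rw [neg_div]
      have : C / (ℓ:ℝ) ≤ C := div_le_self hC0 hℓ'
      linarith
    exact le_trans h1 (hav ℓ hℓ)
  have h0 : Filter.Tendsto (fun ℓ:ℕ => -C/(ℓ:ℝ)) Filter.atTop (nhds 0) :=
    tendsto_const_div_atTop_nhds_zero_nat (-C)
  have hbdd_u : Filter.IsBoundedUnder (· ≥ ·) Filter.atTop (fun ℓ:ℕ => -C/(ℓ:ℝ)) :=
    h0.isBoundedUnder_ge
  have hub : ∀ ℓ, v ℓ ≤ (N:ℝ) := by
    intro ℓ
    have hN0 : (0:ℝ) ≤ (N:ℝ) := by positivity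
    rcases Nat.eq_zero_or_pos ℓ with h0 | h0
    · simp [hv, h0, hN0]
    · have hℓ' : (0:ℝ) < (ℓ:ℝ) := by exact_mod_cast h0
      rw [hv, div_le_iff₀ hℓ']
      calc (∑ i ∈ Finset.range ℓ, ((w i : ℝ))) ≤ ∑ _i ∈ Finset.range ℓ, (N:ℝ) := by
            apply Finset.sum_le_sum
            intro i _
            have := hW i
            simp only [Wball, Finset.mem_Ioo] at this
            have : (w i : ℝ) < (N:ℝ) := by exact_mod_cast this.2
            linarith
        _ = ℓ * (N:ℝ) := by rw [Finset.sum_const, Finset.card_range]; ring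
        _ = (N:ℝ) * ℓ := by ring
  have hcob_v : Filter.IsCoboundedUnder (· ≥ ·) Filter.atTop v :=
    Filter.IsBoundedUnder.isCoboundedUnder_ge (Filter.isBoundedUnder_of ⟨(N:ℝ), hub⟩)
  calc (0:ℝ) = Filter.atTop.liminf (fun ℓ:ℕ => -C/(ℓ:ℝ)) := (h0.liminf_eq).symm
    _ ≤ Filter.atTop.liminf v := by
        refine Filter.liminf_le_liminf ?_ hbdd_u hcob_v
        rw [Filter.eventually_atTop]
        exact ⟨1, hav⟩

lemma mpn_sub_lang (n N : ℕ) (hn : 1 ≤ n) (hN : 1 ≤ N) :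
    MPn n (Wball N) ⊆ (clampAut n N hn hN).Lang := by
  intro w hw
  obtain ⟨G, hcard, hMP, π, hπ, hwi⟩ := hw
  obtain ⟨φ, hedge, hbd⟩ := exists_potential hn hN G hcard hMP
  set A := clampAut n N hn hN with hA
  have hn' : (1:ℤ) ≤ (n:ℤ) := by exact_mod_cast hn
  have hN' : (1:ℤ) ≤ (N:ℤ) := by exact_mod_cast hN
  set B : ℤ := ((n:ℤ) - 1) * ((N:ℤ) - 1) with hB
  have hBexp : B = (n:ℤ) * (N:ℤ) - (n:ℤ) - (N:ℤ) + 1 := by rw [hB]; ring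
  have hWi : ∀ i, w i ∈ Wball N := fun i => by rw [← hwi i]; exact G.wt _ (hπ.1 i)
  have key : ∀ i, ∃ q, A.run w i = some q ∧
      φ (π i).1 + ((n:ℤ) * (N:ℤ) - 1 - B) ≤ (q.1 : ℤ) := by
    intro i
    induction i with
    | zero =>
      refine ⟨⟨(n:ℤ) * (N:ℤ) - 1, qinit_mem hn hN⟩, rfl, ?_⟩
      have := (abs_le.mp (hbd (π 0).1)).2
      show φ (π 0).1 + ((n:ℤ) * (N:ℤ) - 1 - B) ≤ (n:ℤ) * (N:ℤ) - 1
      linarith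
    | succ i ih =>
      obtain ⟨q, hq, hge⟩ := ih
      have hrun : A.run w (i+1) = A.δ (some q) (w i) := by rw [← hq]; rfl
      have hedge' : φ (π (i+1)).1 ≤ φ (π i).1 + w i := by
        have h1 := hedge (π i) (hπ.1 i)
        rw [hπ.2 i, hwi i] at h1
        exact h1
      have habs := abs_le.mp (hbd (π (i+1)).1)
      have hcond : -((n:ℤ) * (N:ℤ)) < q.1 + w i := by linarith [habs.1]
      refine ⟨_, by rw [hrun]; exact clampAut_δ_pos hn hN q (w i) hcond, ?_⟩
      show φ (π (i+1)).1 + ((n:ℤ) * (N:ℤ) - 1 - B) ≤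
        min ((n:ℤ) * (N:ℤ) - 1) (q.1 + w i)
      apply le_min
      · linarith [habs.2]
      · linarith
  refine ⟨hWi, fun i => ?_⟩
  obtain ⟨q, hq, _⟩ := key i
  rw [hq]
  exact Option.some_ne_none q

/-- the automaton `clampAut n N` is `(n, (-N,N))`-separating. -/
theorem clampAut_separating (n N : ℕ) (hn : 1 ≤ n) (hN : 1 ≤ N) :
    Separating n (clampAut n N hn hN) := by

  exact ⟨mpn_sub_lang n N hn hN, lang_sub_mp n N hn hN⟩
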